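/- Let f : ℝⁿ → ℝ be differentiable and α-strongly convex for some α > 0, let x* be a minimizer of f, let y₁, …, y_k ∈ ℝⁿ and set fval = min_{i∈[k]} f(y_i). Then x* belongs to the region R_k = ⋂_{i∈[k]} B(y_i, α, fval). -/

import Mathlib

/-- The ball `B(x, α, v)` from the paper: the set of `z` with
`‖z − (x − (1/α)∇f(x))‖² ≤ ‖∇f(x)‖²/α² − (2/α)(f(x) − v)`. -/
noncomputable def ballB {n : ℕ} (f : EuclideanSpace ℝ (Fin n) → ℝ)
    (x : EuclideanSpace ℝ (Fin n)) (α v : ℝ) : Set (EuclideanSpace ℝ (Fin n)) :=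
  {z | ‖z - (x - (1 / α) • gradient f x)‖ ^ 2 ≤
        ‖gradient f x‖ ^ 2 / α ^ 2 - (2 / α) * (f x - v)}

/-- If `f` is differentiable and `α`-strongly convex with minimizer `x*`,
`y₁, …, y_k` are any points and `fval = min_i f(y_i)`, then `x* ∈ ⋂ᵢ B(yᵢ, α, fval)`. -/
theorem stmt1 {n k : ℕ} (hk : 0 < k) (f : EuclideanSpace ℝ (Fin n) → ℝ) (α : ℝ) (hα : 0 < α)
    (hdiff : Differentiable ℝ f)
    (hsc : ∀ x y : EuclideanSpace ℝ (Fin n),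
      f y ≥ f x + (inner ℝ (gradient f x) (y - x) : ℝ) + (α / 2) * ‖y - x‖ ^ 2)
    (xstar : EuclideanSpace ℝ (Fin n)) (hxstar : ∀ y, f xstar ≤ f y)
    (y : Fin k → EuclideanSpace ℝ (Fin n)) (fval : ℝ)
    (hfval : fval = Finset.univ.inf' ⟨⟨0, hk⟩, Finset.mem_univ _⟩ (fun i => f (y i))) :
    xstar ∈ ⋂ i : Fin k, ballB f (y i) α fval := by
  rw [Set.mem_iInter]
  intro i
  have hle : f xstar ≤ fval := by
    rw [hfval]
    exact Finset.le_inf' _ _ fun j _ => hxstar (y j)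
  have hsc' := hsc (y i) xstar
  set g := gradient f (y i) with hg
  set a := xstar - y i with ha
  have hexp : xstar - (y i - (1 / α) • g) = a + (1 / α) • g := by
    rw [ha]; abel
  show ‖xstar - (y i - (1 / α) • g)‖ ^ 2 ≤ ‖g‖ ^ 2 / α ^ 2 - (2 / α) * (f (y i) - fval)
  rw [hexp, norm_add_sq_real, real_inner_smul_right, norm_smul, mul_pow]
  have h1 : (inner ℝ g a : ℝ) + (α / 2) * ‖a‖ ^ 2 ≤ fval - f (y i) := by
    have := hsc'
    rw [real_inner_comm] at this ⊢
    linarith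
  have hα' : (0:ℝ) < α⁻¹ := inv_pos.mpr hα
  have hnorm : ‖(1:ℝ) / α‖ = 1 / α := by
    rw [Real.norm_eq_abs, abs_of_pos (by positivity)]
  rw [hnorm]
  have key : ‖a‖ ^ 2 + (2 / α) * (inner ℝ a g : ℝ) ≤ -(2 / α) * (f (y i) - fval) := by
    have h2 : (2 / α) * ((inner ℝ g a : ℝ) + (α / 2) * ‖a‖ ^ 2) ≤ (2 / α) * (fval - f (y i)) :=
      mul_le_mul_of_nonneg_left h1 (by positivity)
    have h3 : (2 / α) * ((α / 2) * ‖a‖ ^ 2) = ‖a‖ ^ 2 := by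
      field_simp
    have h4 : (inner ℝ a g : ℝ) = (inner ℝ g a : ℝ) := real_inner_comm g a
    rw [mul_add] at h2
    have h5 : -(2 / α) * (f (y i) - fval) = 2 / α * (fval - f (y i)) := by ring
    rw [h4, h5]
    linarith [h2, h3]
  have heq : (1 / α) ^ 2 * ‖g‖ ^ 2 = ‖g‖ ^ 2 / α ^ 2 := by
    field_simp
  have heq2 : 2 * ((1 / α) * (inner ℝ a g : ℝ)) = (2 / α) * (inner ℝ a g : ℝ) := by ring
  linarith [key, heq, heq2]
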